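/- arXiv:2303.12498 — 5 statements merged into one kernel-verified Lean document; each statement's English description precedes it below -/
import Mathlib

section
/- Let P → Q and P → Q' be homomorphisms of saturated commutative cancellative monoids, and let ⊕_P denote the pushout in the category of saturated commutative monoids. Then there is a canonical isomorphism of sharp monoids between the sharpening of Q ⊕_P Q' and the sharpening of Q̄ ⊕_{P̄} Q̄', where M̄ = M/M^× denotes the sharpening. -/
universe u

/-- The congruence on a commutative monoid `M` identifying `m` with `m * u`
for every unit `u`. -/
def unitCon (M : Type*) [CommMonoid M] : Con M :=
  conGen (fun a b => ∃ u : Mˣ, a = b * u)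

/-- The sharpening `M̄ = M / M^×` of a commutative monoid `M`. -/
abbrev Sharpening (M : Type*) [CommMonoid M] := (unitCon M).Quotient

/-- The homomorphism of sharpenings induced by a homomorphism of commutative
monoids. -/
def sharpMap {M N : Type*} [CommMonoid M] [CommMonoid N] (f : M →* N) :
    Sharpening M →* Sharpening N :=
  Con.lift _ ((unitCon N).mk'.comp f) (by
    apply Con.conGen_le.mpr
    rintro x y ⟨u, rfl⟩
    show (unitCon N).mk' (f (y * u)) = (unitCon N).mk' (f y)
    have h : (unitCon N) (f (y * u)) (f y) :=
      ConGen.Rel.of _ _ ⟨Units.map f u, by simp⟩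
    exact (Con.eq _).mpr h)

/-- A commutative monoid is saturated if whenever `aⁿ = bⁿ * c` for some `n ≥ 1`
(i.e. `n` times the element `a - b` of the Grothendieck group lies in the monoid),
already `a = b * d` for some `d` (i.e. `a - b` lies in the monoid). -/
def IsSaturated (M : Type u) [CommMonoid M] : Prop :=
  ∀ (a b : M) (n : ℕ), 1 ≤ n → (∃ c, a ^ n = b ^ n * c) → ∃ d, a = b * d

section Aux

theorem unitCon_iff {M : Type*} [CommMonoid M] {a b : M} :
    unitCon M a b ↔ ∃ u : Mˣ, a = b * u := by
  constructor
  · intro h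
    induction h with
    | of x y h => exact h
    | refl x => exact ⟨1, by simp⟩
    | symm _ ih =>
        obtain ⟨u, rfl⟩ := ih
        exact ⟨u⁻¹, by simp⟩
    | trans _ _ ih1 ih2 =>
        obtain ⟨u, rfl⟩ := ih1
        obtain ⟨v, hv⟩ := ih2
        exact ⟨v * u, by rw [hv, Units.val_mul, mul_assoc]⟩
    | mul _ _ ih1 ih2 =>
        obtain ⟨u, rfl⟩ := ih1
        obtain ⟨v, rfl⟩ := ih2
        exact ⟨u * v, by rw [Units.val_mul, mul_mul_mul_comm]⟩
  · intro h
    exact ConGen.Rel.of _ _ h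

theorem mk'_eq_iff {M : Type*} [CommMonoid M] {a b : M} :
    (unitCon M).mk' a = (unitCon M).mk' b ↔ ∃ u : Mˣ, a = b * u := by
  exact (Con.eq _).trans unitCon_iff

theorem sharp_isUnit {M : Type*} [CommMonoid M] {x : Sharpening M}
    (h : IsUnit x) : x = 1 := by
  obtain ⟨a, rfl⟩ := Con.mk'_surjective x
  obtain ⟨y, hy⟩ := h.exists_right_inv
  obtain ⟨b, rfl⟩ := Con.mk'_surjective y
  have h1 : (unitCon M).mk' (a * b) = (unitCon M).mk' 1 := by
    simpa using hy
  obtain ⟨u, hu⟩ := mk'_eq_iff.mp h1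
  have ha : IsUnit a := IsUnit.of_mul_eq_one (a := a) (b * ↑u⁻¹) (by
    rw [← mul_assoc, hu]; simp)
  obtain ⟨v, rfl⟩ := ha
  exact mk'_eq_iff.mpr ⟨v, by simp⟩

theorem sharp_sat {M : Type u} [CommMonoid M] (h : IsSaturated M) :
    IsSaturated (Sharpening M) := by
  intro x y n hn hc
  obtain ⟨a, rfl⟩ := Con.mk'_surjective x
  obtain ⟨b, rfl⟩ := Con.mk'_surjective y
  obtain ⟨z, hz⟩ := hc
  obtain ⟨c, rfl⟩ := Con.mk'_surjective z
  have h1 : (unitCon M).mk' (a ^ n) = (unitCon M).mk' (b ^ n * c) := by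
    rw [map_mul, map_pow, map_pow]; exact hz
  obtain ⟨u, hu⟩ := mk'_eq_iff.mp h1
  obtain ⟨d, hd⟩ := h a b n hn ⟨c * u, by rw [hu, mul_assoc]⟩
  exact ⟨(unitCon M).mk' d, by rw [hd]; simp⟩

/-- Descend a hom to a sharp-type target along the sharpening. -/
def descend {M T : Type*} [CommMonoid M] [CommMonoid T] (w : M →* T)
    (hw : ∀ u : Mˣ, w u = 1) : Sharpening M →* T :=
  Con.lift _ w (by
    apply Con.conGen_le.mpr
    rintro x y ⟨u, rfl⟩
    show w (y * u) = w y
    rw [map_mul, hw u, mul_one])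

@[simp] theorem descend_mk {M T : Type*} [CommMonoid M] [CommMonoid T]
    (w : M →* T) (hw : ∀ u : Mˣ, w u = 1) (a : M) :
    descend w hw ((unitCon M).mk' a) = w a := rfl

@[simp] theorem sharpMap_mk {M N : Type*} [CommMonoid M] [CommMonoid N]
    (f : M →* N) (a : M) :
    sharpMap f ((unitCon M).mk' a) = (unitCon N).mk' (f a) := rfl

theorem unit_to_sharp {M T : Type*} [CommMonoid M] [CommMonoid T]
    (w : M →* (Sharpening T)) (u : Mˣ) : w u = 1 :=
  sharp_isUnit ((Units.map w u).isUnit)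

end Aux

/-- `(S, i, j)` is a pushout of `Q ←f- P -g→ Q'` in the category of saturated
commutative monoids. -/



structure IsSatPushout {P Q Q' S : Type u}
    [CommMonoid P] [CommMonoid Q] [CommMonoid Q'] [CommMonoid S]
    (f : P →* Q) (g : P →* Q') (i : Q →* S) (j : Q' →* S) : Prop where
  sat : IsSaturated S
  comm : i.comp f = j.comp g
  universal : ∀ (T : Type u) [CommMonoid T], IsSaturated T →
    ∀ (u : Q →* T) (v : Q' →* T), u.comp f = v.comp g →
      ∃! w : S →* T, w.comp i = u ∧ w.comp j = v

/-- Let `P → Q`, `P → Q'` be homomorphisms of saturated commutative cancellative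
monoids, let `S` be the pushout `Q ⊕_P Q'` in saturated commutative monoids and `S'`
the pushout `Q̄ ⊕_{P̄} Q̄'` of the sharpenings.  Then there is a canonical isomorphism
between the sharpening of `S` and the sharpening of `S'`, compatible with the
structure maps from `Q` and `Q'`. -/
theorem stmt3 {P Q Q' S S' : Type u}
    [CommMonoid P] [CommMonoid Q] [CommMonoid Q'] [CommMonoid S] [CommMonoid S']
    [IsCancelMul P] [IsCancelMul Q] [IsCancelMul Q']
    (hPsat : IsSaturated P) (hQsat : IsSaturated Q) (hQ'sat : IsSaturated Q')
    (f : P →* Q) (g : P →* Q')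
    (i : Q →* S) (j : Q' →* S) (hS : IsSatPushout f g i j)
    (ib : Sharpening Q →* S') (jb : Sharpening Q' →* S')
    (hS' : IsSatPushout (sharpMap f) (sharpMap g) ib jb) :
    ∃ e : Sharpening S ≃* Sharpening S',
      (∀ q : Q, e ((unitCon S).mk' (i q)) = (unitCon S').mk' (ib ((unitCon Q).mk' q))) ∧
      (∀ q' : Q', e ((unitCon S).mk' (j q')) =
        (unitCon S').mk' (jb ((unitCon Q').mk' q'))) := by
  
  -- sharpenings of the pushouts are saturated
  have hTsat : IsSaturated (Sharpening S') := sharp_sat hS'.sat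
  have hTsat' : IsSaturated (Sharpening S) := sharp_sat hS.sat
  -- map S → Sharpening S'
  set u1 : Q →* Sharpening S' :=
    ((unitCon S').mk'.comp ib).comp (unitCon Q).mk' with hu1
  set v1 : Q' →* Sharpening S' :=
    ((unitCon S').mk'.comp jb).comp (unitCon Q').mk' with hv1
  have hc1 : u1.comp f = v1.comp g := by
    ext p
    show (unitCon S').mk' (ib (sharpMap f ((unitCon P).mk' p)))
      = (unitCon S').mk' (jb (sharpMap g ((unitCon P).mk' p)))
    exact congrArg _ (DFunLike.congr_fun hS'.comm ((unitCon P).mk' p))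
  obtain ⟨w, ⟨hwi, hwj⟩, -⟩ := hS.universal (Sharpening S') hTsat u1 v1 hc1
  -- map S' → Sharpening S
  have hc2 : (sharpMap i).comp (sharpMap f) = (sharpMap j).comp (sharpMap g) := by
    apply MonoidHom.ext
    intro x
    induction x using Con.induction_on with
    | H p =>
      show (unitCon S).mk' (i (f p)) = (unitCon S).mk' (j (g p))
      rw [show i (f p) = j (g p) from DFunLike.congr_fun hS.comm p]
  obtain ⟨w', ⟨hw'i, hw'j⟩, -⟩ :=
    hS'.universal (Sharpening S) hTsat' (sharpMap i) (sharpMap j) hc2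
  -- descend both maps
  set wb : Sharpening S →* Sharpening S' := descend w (unit_to_sharp w) with hwb
  set w'b : Sharpening S' →* Sharpening S := descend w' (unit_to_sharp w') with hw'b
  -- roundtrip on Sharpening S
  have hmkQ : ∀ q : Q, wb ((unitCon S).mk' (i q)) =
      (unitCon S').mk' (ib ((unitCon Q).mk' q)) := by
    intro q
    exact DFunLike.congr_fun hwi q
  have hmkQ' : ∀ q' : Q', wb ((unitCon S).mk' (j q')) =
      (unitCon S').mk' (jb ((unitCon Q').mk' q')) := by
    intro q'
    exact DFunLike.congr_fun hwj q'
  have hcA : ((unitCon S).mk'.comp i).comp f = ((unitCon S).mk'.comp j).comp g := by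
    ext p
    simp only [MonoidHom.comp_apply]
    rw [show i (f p) = j (g p) from DFunLike.congr_fun hS.comm p]
  obtain ⟨w0, -, hw0uniq⟩ := hS.universal (Sharpening S) hTsat'
    ((unitCon S).mk'.comp i) ((unitCon S).mk'.comp j) hcA
  have hA : (w'b.comp wb).comp (unitCon S).mk' = (unitCon S).mk' := by
    have e1 : (w'b.comp wb).comp (unitCon S).mk' = w0 := by
      apply hw0uniq
      constructor
      · ext q
        simp only [MonoidHom.comp_apply]
        rw [hmkQ q]
        show w' (ib ((unitCon Q).mk' q)) = (unitCon S).mk' (i q)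
        rw [show w' (ib ((unitCon Q).mk' q)) = sharpMap i ((unitCon Q).mk' q) from
          DFunLike.congr_fun hw'i ((unitCon Q).mk' q)]
        rfl
      · ext q'
        simp only [MonoidHom.comp_apply]
        rw [hmkQ' q']
        show w' (jb ((unitCon Q').mk' q')) = (unitCon S).mk' (j q')
        rw [show w' (jb ((unitCon Q').mk' q')) = sharpMap j ((unitCon Q').mk' q') from
          DFunLike.congr_fun hw'j ((unitCon Q').mk' q')]
        rfl
    have e2 : (unitCon S).mk' = w0 := by
      apply hw0uniq
      exact ⟨rfl, rfl⟩
    rw [e1, e2]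
  -- roundtrip on Sharpening S'
  have hcB : ((unitCon S').mk'.comp ib).comp (sharpMap f)
      = ((unitCon S').mk'.comp jb).comp (sharpMap g) := by
    rw [MonoidHom.comp_assoc, MonoidHom.comp_assoc, hS'.comm]
  obtain ⟨w1, -, hw1uniq⟩ := hS'.universal (Sharpening S') hTsat
    ((unitCon S').mk'.comp ib) ((unitCon S').mk'.comp jb) hcB
  have hB : (wb.comp w'b).comp (unitCon S').mk' = (unitCon S').mk' := by
    have e1 : (wb.comp w'b).comp (unitCon S').mk' = w1 := by
      apply hw1uniq
      constructor
      · apply MonoidHom.ext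
        intro x
        induction x using Con.induction_on with
        | H q =>
          show wb (w' (ib ((unitCon Q).mk' q))) = (unitCon S').mk' (ib ((unitCon Q).mk' q))
          rw [show w' (ib ((unitCon Q).mk' q)) = sharpMap i ((unitCon Q).mk' q) from
            DFunLike.congr_fun hw'i ((unitCon Q).mk' q)]
          show wb ((unitCon S).mk' (i q)) = _
          exact hmkQ q
      · apply MonoidHom.ext
        intro x
        induction x using Con.induction_on with
        | H q' =>
          show wb (w' (jb ((unitCon Q').mk' q'))) = (unitCon S').mk' (jb ((unitCon Q').mk' q'))
          rw [show w' (jb ((unitCon Q').mk' q')) = sharpMap j ((unitCon Q').mk' q') from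
            DFunLike.congr_fun hw'j ((unitCon Q').mk' q')]
          show wb ((unitCon S).mk' (j q')) = _
          exact hmkQ' q'
    have e2 : (unitCon S').mk' = w1 := by
      apply hw1uniq
      exact ⟨rfl, rfl⟩
    rw [e1, e2]
  refine ⟨{ toFun := wb, invFun := w'b,
            left_inv := ?_, right_inv := ?_, map_mul' := map_mul wb }, hmkQ, hmkQ'⟩
  · intro x
    induction x using Con.induction_on with
    | H s => exact DFunLike.congr_fun hA s
  · intro x
    induction x using Con.induction_on with
    | H s => exact DFunLike.congr_fun hB s
end

section
/- Let f : C → D be a continuous and cocontinuous functor of sites that preserves Čech coverings. Assume: (i) every object Y of D admits a covering {Y_i → Y} such that all finite fiber products Y_{i₁} ×_Y ⋯ ×_Y Y_{iₙ} lie in the essential image of f; and (ii) the pushforward f_* : Shv(D, Set) → Shv(C, Set), (f_* G)(X) = G(f(X)), is an equivalence of categories. Then for every category V admitting all small limits, the pushforward f_* : Shv(D, V) → Shv(C, V) between categories of V-valued sheaves is an equivalence of categories. -/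
open CategoryTheory Limits Opposite

universe u v' u'

set_option linter.unusedSectionVars false
set_option maxHeartbeats 1000000

namespace Stmt7Aux

variable {C D : Type u} [SmallCategory C] [SmallCategory D]
variable (J : GrothendieckTopology C) (L : GrothendieckTopology D) (f : C ⥤ D)
variable [Functor.IsContinuous f J L] [f.IsCocontinuous J L]

/-- The comparison morphism `a_J (yoneda X) ⟶ f_* (a_L (yoneda (f X)))`. -/
noncomputable def theta (X : C) :
    (presheafToSheaf J (Type u)).obj (yoneda.obj X) ⟶
      (f.sheafPushforwardContinuous (Type u) J L).obj
        ((presheafToSheaf L (Type u)).obj (yoneda.obj (f.obj X))) :=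
  ((sheafificationAdjunction J (Type u)).homEquiv _ _).symm
    (yonedaMap f X ≫ Functor.whiskerLeft f.op (toSheafify L (yoneda.obj (f.obj X))))

lemma toSheafify_comp_theta_val (X : C) :
    toSheafify J (yoneda.obj X) ≫ (theta J L f X).hom =
      yonedaMap f X ≫ Functor.whiskerLeft f.op (toSheafify L (yoneda.obj (f.obj X))) := by
  have h := ((sheafificationAdjunction J (Type u)).homEquiv (yoneda.obj X)
      ((f.sheafPushforwardContinuous (Type u) J L).obj
        ((presheafToSheaf L (Type u)).obj (yoneda.obj (f.obj X))))).apply_symm_apply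
    (yonedaMap f X ≫ Functor.whiskerLeft f.op (toSheafify L (yoneda.obj (f.obj X))))
  rw [Adjunction.homEquiv_unit] at h
  exact h

lemma theta_val_app {X W : C} (l : W ⟶ X) :
    (theta J L f X).hom.app (op W) ((toSheafify J (yoneda.obj X)).app (op W) l) =
      (toSheafify L (yoneda.obj (f.obj X))).app (op (f.obj W)) (f.map l) := by
  have h := ConcreteCategory.congr_hom (congr_app (toSheafify_comp_theta_val J L f X) (op W)) l
  exact h

lemma theta_comp_map (X : C) (G : Sheaf L (Type u))
    (α : (presheafToSheaf L (Type u)).obj (yoneda.obj (f.obj X)) ⟶ G) :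
    theta J L f X ≫ (f.sheafPushforwardContinuous (Type u) J L).map α =
      ((sheafificationAdjunction J (Type u)).homEquiv (yoneda.obj X)
        ((f.sheafPushforwardContinuous (Type u) J L).obj G)).symm
        (yonedaEquiv.symm
          (show ((f.sheafPushforwardContinuous (Type u) J L).obj G).val.obj (op X) from
            α.hom.app (op (f.obj X))
              ((toSheafify L (yoneda.obj (f.obj X))).app (op (f.obj X)) (𝟙 (f.obj X))))) := by
  rw [Equiv.eq_symm_apply, Equiv.eq_symm_apply]
  have h1 : ((sheafificationAdjunction J (Type u)).homEquiv (yoneda.obj X)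
      ((f.sheafPushforwardContinuous (Type u) J L).obj G))
        (theta J L f X ≫ (f.sheafPushforwardContinuous (Type u) J L).map α) =
      toSheafify J (yoneda.obj X) ≫ (theta J L f X).hom ≫
        ((f.sheafPushforwardContinuous (Type u) J L).map α).hom := by
    rw [Adjunction.homEquiv_unit]
    rfl
  rw [h1, yonedaEquiv_apply]
  have h2 := theta_val_app J L f (𝟙 X)
  simp only [NatTrans.comp_app, types_comp_apply]
  erw [h2]
  simp
  rfl


lemma theta_isIso (heq : (f.sheafPushforwardContinuous (Type u) J L).IsEquivalence) (X : C) :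
    IsIso (theta J L f X) := by
  haveI := heq
  rw [isIso_iff_coyoneda_map_bijective]
  intro F
  suffices h : ∀ (G : Sheaf L (Type u)),
      Function.Bijective (fun q : ((f.sheafPushforwardContinuous (Type u) J L).obj ((presheafToSheaf L (Type u)).obj
        (yoneda.obj (f.obj X))) ⟶ (f.sheafPushforwardContinuous (Type u) J L).obj G) => theta J L f X ≫ q) by
    obtain ⟨G, ⟨e⟩⟩ : ∃ G, Nonempty ((f.sheafPushforwardContinuous (Type u) J L).obj G ≅ F) :=
      ⟨(f.sheafPushforwardContinuous (Type u) J L).objPreimage F,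
        ⟨(f.sheafPushforwardContinuous (Type u) J L).objObjPreimageIso F⟩⟩
    have hfun : (fun q => theta J L f X ≫ q : (_ ⟶ F) → _) =
        (fun p => p ≫ e.hom) ∘ (fun q => theta J L f X ≫ q) ∘ (fun p => p ≫ e.inv) := by
      funext q
      simp
    rw [hfun]
    refine Function.Bijective.comp ?_ (Function.Bijective.comp (h G) ?_)
    · exact ⟨fun a b hab => by simpa using congrArg (fun p => p ≫ e.inv) hab,
        fun p => ⟨p ≫ e.inv, by simp⟩⟩
    · exact ⟨fun a b hab => by simpa using congrArg (fun p => p ≫ e.hom) hab,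
        fun p => ⟨p ≫ e.hom, by simp⟩⟩
  intro G
  constructor
  · intro q₁ q₂ h12
    obtain ⟨α₁, rfl⟩ := (f.sheafPushforwardContinuous (Type u) J L).map_surjective q₁
    obtain ⟨α₂, rfl⟩ := (f.sheafPushforwardContinuous (Type u) J L).map_surjective q₂
    replace h12 : theta J L f X ≫ (f.sheafPushforwardContinuous (Type u) J L).map α₁ =
        theta J L f X ≫ (f.sheafPushforwardContinuous (Type u) J L).map α₂ := h12
    rw [theta_comp_map J L f X G α₁, theta_comp_map J L f X G α₂] at h12
    replace h12 := yonedaEquiv.symm.injective (((sheafificationAdjunction J (Type u)).homEquiv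
      _ _).symm.injective h12)
    apply congrArg (f.sheafPushforwardContinuous (Type u) J L).map
    apply ((sheafificationAdjunction L (Type u)).homEquiv _ _).injective
    apply yonedaEquiv.injective
    rw [Adjunction.homEquiv_unit, Adjunction.homEquiv_unit]
    simp [yonedaEquiv_apply] at h12 ⊢
    exact h12
  · intro p
    obtain ⟨ζ, hζ⟩ : ∃ ζ : ((sheafToPresheaf J (Type u)).obj ((f.sheafPushforwardContinuous (Type u) J L).obj G)).obj (op X),
        ((sheafificationAdjunction J (Type u)).homEquiv _ _).symm (yonedaEquiv.symm ζ) = p :=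
      ⟨yonedaEquiv (((sheafificationAdjunction J (Type u)).homEquiv _ _) p), by simp⟩
    refine ⟨(f.sheafPushforwardContinuous (Type u) J L).map
      (((sheafificationAdjunction L (Type u)).homEquiv _ _).symm
        (yonedaEquiv.symm (show G.val.obj (op (f.obj X)) from ζ))), ?_⟩
    show theta J L f X ≫ _ = p
    rw [theta_comp_map, ← hζ]
    apply congrArg
    apply congrArg
    have h3 := ((sheafificationAdjunction L (Type u)).homEquiv _ _).apply_symm_apply
      (yonedaEquiv.symm (show G.val.obj (op (f.obj X)) from ζ))
    rw [Adjunction.homEquiv_unit] at h3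
    have h2 := ConcreteCategory.congr_hom (congr_app h3 (op (f.obj X))) (𝟙 (f.obj X))
    simp [yonedaEquiv] at h2 ⊢
    exact h2

lemma imageSieve_mem_of_heq (heq : (f.sheafPushforwardContinuous (Type u) J L).IsEquivalence)
    {U V : C} (u : f.obj U ⟶ f.obj V) : f.imageSieve u ∈ J U := by
  haveI := theta_isIso J L f heq V
  haveI : IsIso (theta J L f V).hom :=
    (inferInstance : IsIso ((sheafToPresheaf J (Type u)).map (theta J L f V)))
  -- the section of the target corresponding to `u`
  have hS0 : Presheaf.imageSieve (theta J L f V).hom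
      ((toSheafify L (yoneda.obj (f.obj V))).app (op (f.obj U)) u) ∈ J U :=
    Presheaf.imageSieve_mem J (theta J L f V).hom _
  refine J.transitive hS0 _ ?_
  rintro X' h ⟨t, ht⟩
  have hS1 : Presheaf.imageSieve (toSheafify J (yoneda.obj V)) t ∈ J X' :=
    Presheaf.imageSieve_mem J _ t
  refine J.transitive hS1 _ ?_
  rintro X'' h' ⟨l, hl⟩
  rw [← Sieve.pullback_comp]
  -- compute the two images under theta
  have e1 : (theta J L f V).hom.app (op X'') ((toSheafify J (yoneda.obj V)).app (op X'') l) =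
      (toSheafify L (yoneda.obj (f.obj V))).app (op (f.obj X'')) (f.map l) :=
    theta_val_app J L f l
  have e2 : (theta J L f V).hom.app (op X'')
        (((presheafToSheaf J (Type u)).obj (yoneda.obj V)).val.map h'.op t) =
      ((f.sheafPushforwardContinuous (Type u) J L).obj
        ((presheafToSheaf L (Type u)).obj (yoneda.obj (f.obj V)))).val.map h'.op
        ((theta J L f V).hom.app (op X') t) :=
    ConcreteCategory.congr_hom ((theta J L f V).hom.naturality h'.op) t
  have s1 : (theta J L f V).hom.app (op X'') ((toSheafify J (yoneda.obj V)).app (op X'') l) =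
      (theta J L f V).hom.app (op X'')
        (((presheafToSheaf J (Type u)).obj (yoneda.obj V)).val.map h'.op t) :=
    congrArg ((theta J L f V).hom.app (op X'')) hl
  have s2 : ((f.sheafPushforwardContinuous (Type u) J L).obj
        ((presheafToSheaf L (Type u)).obj (yoneda.obj (f.obj V)))).val.map h'.op
        ((theta J L f V).hom.app (op X') t) =
      ((f.sheafPushforwardContinuous (Type u) J L).obj
        ((presheafToSheaf L (Type u)).obj (yoneda.obj (f.obj V)))).val.map h'.op
        (((f.sheafPushforwardContinuous (Type u) J L).obj
          ((presheafToSheaf L (Type u)).obj (yoneda.obj (f.obj V)))).val.map h.op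
          ((toSheafify L (yoneda.obj (f.obj V))).app (op (f.obj U)) u)) :=
    congrArg _ ht
  have s3 : ((f.sheafPushforwardContinuous (Type u) J L).obj
        ((presheafToSheaf L (Type u)).obj (yoneda.obj (f.obj V)))).val.map h'.op
        (((f.sheafPushforwardContinuous (Type u) J L).obj
          ((presheafToSheaf L (Type u)).obj (yoneda.obj (f.obj V)))).val.map h.op
          ((toSheafify L (yoneda.obj (f.obj V))).app (op (f.obj U)) u)) =
      (toSheafify L (yoneda.obj (f.obj V))).app (op (f.obj X''))
        (f.map h' ≫ f.map h ≫ u) := by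
    have c1 := (FunctorToTypes.map_comp_apply
      ((presheafToSheaf L (Type u)).obj (yoneda.obj (f.obj V))).val
      (f.map h).op (f.map h').op
      ((toSheafify L (yoneda.obj (f.obj V))).app (op (f.obj U)) u)).symm
    have c2 := ConcreteCategory.congr_hom ((toSheafify L (yoneda.obj (f.obj V))).naturality
      (f.map h' ≫ f.map h).op) u
    dsimp at c1 c2 ⊢
    erw [c1]
    rw [show (f.map h' ≫ f.map h) ≫ u = f.map h' ≫ f.map h ≫ u from by simp] at c2
    exact c2.symm
  have e3 : (toSheafify L (yoneda.obj (f.obj V))).app (op (f.obj X'')) (f.map l) =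
      (toSheafify L (yoneda.obj (f.obj V))).app (op (f.obj X''))
        (f.map h' ≫ f.map h ≫ u) :=
    e1.symm.trans (s1.trans (e2.trans (s2.trans s3)))
  have hE : Presheaf.equalizerSieve (F := yoneda.obj (f.obj V)) (f.map l)
      (f.map h' ≫ f.map h ≫ u) ∈ L (f.obj X'') :=
    Presheaf.equalizerSieve_mem L (toSheafify L (yoneda.obj (f.obj V))) _ _ e3
  have hPull := f.cover_lift J L hE
  refine J.superset_covering ?_ hPull
  rintro X''' k hk
  refine ⟨k ≫ l, ?_⟩
  have hk' : f.map k ≫ f.map l = f.map k ≫ f.map h' ≫ f.map h ≫ u := hk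
  simp only [Functor.map_comp, Category.assoc, hk']

lemma equalizer_mem_of_heq (heq : (f.sheafPushforwardContinuous (Type u) J L).IsEquivalence)
    {U V : C} (h₁ h₂ : U ⟶ V) (e : f.map h₁ = f.map h₂) :
    Sieve.equalizer h₁ h₂ ∈ J U := by
  haveI := theta_isIso J L f heq V
  haveI : IsIso (theta J L f V).hom :=
    (inferInstance : IsIso ((sheafToPresheaf J (Type u)).map (theta J L f V)))
  have hxy : (theta J L f V).hom.app (op U) ((toSheafify J (yoneda.obj V)).app (op U) h₁) =
      (theta J L f V).hom.app (op U) ((toSheafify J (yoneda.obj V)).app (op U) h₂) := by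
    rw [theta_val_app, theta_val_app, e]
  have hS0 : Presheaf.equalizerSieve ((toSheafify J (yoneda.obj V)).app (op U) h₁)
      ((toSheafify J (yoneda.obj V)).app (op U) h₂) ∈ J U :=
    Presheaf.equalizerSieve_mem J (theta J L f V).hom _ _ hxy
  refine J.transitive hS0 _ ?_
  rintro X' m hm
  have hm' : (toSheafify J (yoneda.obj V)).app (op X') (m ≫ h₁) =
      (toSheafify J (yoneda.obj V)).app (op X') (m ≫ h₂) := by
    have n1 := ConcreteCategory.congr_hom ((toSheafify J (yoneda.obj V)).naturality m.op) h₁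
    have n2 := ConcreteCategory.congr_hom ((toSheafify J (yoneda.obj V)).naturality m.op) h₂
    dsimp at n1 n2
    rw [n1, n2]
    exact hm
  have hS1 : Presheaf.equalizerSieve (F := yoneda.obj V) (m ≫ h₁) (m ≫ h₂) ∈ J X' :=
    Presheaf.equalizerSieve_mem J (toSheafify J (yoneda.obj V)) _ _ hm'
  refine J.superset_covering ?_ hS1
  rintro X'' q hq
  have hq' : q ≫ m ≫ h₁ = q ≫ m ≫ h₂ := hq
  simp only [Sieve.equalizer_apply, Sieve.pullback_apply, Category.assoc]
  simpa using hq'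


lemma isCoverDense_of_hgen
    (hgen : ∀ Y : D, ∃ S : Sieve Y, S ∈ L Y ∧
      (∀ {Z : D} (g : Z ⟶ Y), S g → ∃ X : C, Nonempty (f.obj X ≅ Z))) :
    f.IsCoverDense L := by
  constructor
  intro Y
  obtain ⟨S, hS, h1⟩ := hgen Y
  refine L.superset_covering ?_ hS
  intro Z gZ hgZ
  obtain ⟨X, ⟨iso⟩⟩ := h1 gZ hgZ
  exact ⟨⟨X, iso.inv, iso.hom ≫ gZ, by simp⟩⟩

lemma isLocallyFull_of_heq (hcover : CoverPreserving J L f)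
    (heq : (f.sheafPushforwardContinuous (Type u) J L).IsEquivalence) :
    f.IsLocallyFull L := by
  constructor
  intro U V u
  exact hcover.cover_preserve (imageSieve_mem_of_heq J L f heq u)

lemma isLocallyFaithful_of_heq (hcover : CoverPreserving J L f)
    (heq : (f.sheafPushforwardContinuous (Type u) J L).IsEquivalence) :
    f.IsLocallyFaithful L := by
  constructor
  intro U V h₁ h₂ e
  exact hcover.cover_preserve (equalizer_mem_of_heq J L f heq h₁ h₂ e)

lemma inducedTopology_le (hcover : CoverPreserving J L f)
    (heq : (f.sheafPushforwardContinuous (Type u) J L).IsEquivalence)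
    [f.IsCoverDense L] [f.IsLocallyFull L] [f.IsLocallyFaithful L] :
    f.inducedTopology L ≤ J := by
  apply le_topology_of_closedSieves_isSheaf
  haveI := heq
  let P : Sheaf J (Type u) :=
    ⟨(Functor.closedSieves J).toFunctor, (isSheaf_iff_isSheaf_of_type _ _).2 (classifier_isSheaf J)⟩
  let G := (f.sheafPushforwardContinuous (Type u) J L).objPreimage P
  have hG : Presieve.IsSheaf (f.inducedTopology L) (f.op ⋙ G.val) :=
    f.op_comp_isSheaf_of_types (f.inducedTopology L) L G
  exact Presieve.isSheaf_iso (f.inducedTopology L)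
    ((sheafToPresheaf J (Type u)).mapIso
      ((f.sheafPushforwardContinuous (Type u) J L).objObjPreimageIso P)) hG

lemma isDenseSubsite_of_heq (hcover : CoverPreserving J L f)
    (heq : (f.sheafPushforwardContinuous (Type u) J L).IsEquivalence)
    [f.IsCoverDense L] [f.IsLocallyFull L] [f.IsLocallyFaithful L] :
    f.IsDenseSubsite J L := by
  have hle := inducedTopology_le J L f hcover heq
  refine { functorPushforward_mem_iff := ?_ }
  intro X S
  exact ⟨fun hS => hle _ (by simpa using hS), fun hS => hcover.cover_preserve hS⟩

end Stmt7Aux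

/-- Let `f : C ⥤ D` be a continuous and cocontinuous functor of sites which preserves
Čech coverings (coverings map to coverings and pairwise fiber products of covering
morphisms are preserved).  Assume that every object of `D` admits a covering whose
members, together with their fiber products, lie in the essential image of `f`, and
that the pushforward `f_* : Shv(D, Set) → Shv(C, Set)` is an equivalence.  Then for
every category `V` admitting all small limits, the pushforward
`f_* : Shv(D, V) → Shv(C, V)` is an equivalence of categories. -/
theorem stmt7 {C D : Type u} [SmallCategory C] [SmallCategory D] [HasPullbacks C]
    (J : GrothendieckTopology C) (L : GrothendieckTopology D) (f : C ⥤ D)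
    [Functor.IsContinuous f J L]
    [f.IsCocontinuous J L]
    (hcover : CoverPreserving J L f)
    (hpb : ∀ {X : C} (S : Sieve X), S ∈ J X → ∀ {Y Z : C} (g : Y ⟶ X) (h : Z ⟶ X),
      S g → S h →
      IsPullback (f.map (pullback.fst g h)) (f.map (pullback.snd g h))
        (f.map g) (f.map h))
    (hgen : ∀ Y : D, ∃ S : Sieve Y, S ∈ L Y ∧
      (∀ {Z : D} (g : Z ⟶ Y), S g → ∃ X : C, Nonempty (f.obj X ≅ Z)) ∧
      (∀ {Z Z' : D} (g : Z ⟶ Y) (g' : Z' ⟶ Y), S g → S g' →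
        ∃ (W : D) (p : W ⟶ Z) (q : W ⟶ Z'), IsPullback p q g g' ∧
          ∃ X : C, Nonempty (f.obj X ≅ W)))
    (heq : (f.sheafPushforwardContinuous (Type u) J L).IsEquivalence)
    (V : Type u') [Category.{v'} V] [HasLimitsOfSize.{u, u} V] :
    (f.sheafPushforwardContinuous V J L).IsEquivalence := by
  haveI : f.IsCoverDense L :=
    Stmt7Aux.isCoverDense_of_hgen L f (fun Y => by
      obtain ⟨S, hS, h1, _⟩ := hgen Y
      exact ⟨S, hS, h1⟩)
  haveI : f.IsLocallyFull L := Stmt7Aux.isLocallyFull_of_heq J L f hcover heq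
  haveI : f.IsLocallyFaithful L := Stmt7Aux.isLocallyFaithful_of_heq J L f hcover heq
  haveI : f.IsDenseSubsite J L := Stmt7Aux.isDenseSubsite_of_heq J L f hcover heq
  infer_instance
end

section
/- Let C and D be categories, F, H : D → C functors, G : C → D a right adjoint of F, and K : C → D a left adjoint of H. Let p : F ⟶ H be a natural transformation. If the whiskered natural transformations p ∘ G : F∘G ⟶ H∘G and p ∘ K : F∘K ⟶ H∘K (both between functors C → C) are natural isomorphisms, then p is a natural isomorphism. -/
open CategoryTheory

/-- Let `F, H : D ⥤ C`, let `G` be a right adjoint of `F` and `K` a left adjoint of `H`,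
and let `p : F ⟶ H` be a natural transformation.  If the whiskerings `p ∘ G` and `p ∘ K`
are natural isomorphisms, then so is `p`. -/
theorem stmt8 {C D : Type*} [Category C] [Category D]
    (F H : D ⥤ C) (G K : C ⥤ D) (adj₁ : F ⊣ G) (adj₂ : K ⊣ H) (p : F ⟶ H)
    (h₁ : IsIso (Functor.whiskerLeft G p)) (h₂ : IsIso (Functor.whiskerLeft K p)) :
    IsIso p := by
  have key : ∀ X : D, IsIso (p.app X) := by
    intro X
    have i1 : IsIso (p.app (G.obj (F.obj X))) :=
      inferInstanceAs (IsIso ((Functor.whiskerLeft G p).app (F.obj X)))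
    have i2 : IsIso (p.app (K.obj (H.obj X))) :=
      inferInstanceAs (IsIso ((Functor.whiskerLeft K p).app (H.obj X)))
    set q : H.obj X ⟶ F.obj X :=
      H.map (adj₁.unit.app X) ≫ inv (p.app (G.obj (F.obj X))) ≫ adj₁.counit.app (F.obj X)
      with hqdef
    set s : H.obj X ⟶ F.obj X :=
      adj₂.unit.app (H.obj X) ≫ inv (p.app (K.obj (H.obj X))) ≫ F.map (adj₂.counit.app X)
      with hsdef
    have nat1 := p.naturality (adj₁.unit.app X)
    have nat2 := p.naturality (adj₂.counit.app X)
    simp only [Functor.id_obj, Functor.comp_obj] at nat1 nat2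
    have hq : p.app X ≫ q = 𝟙 (F.obj X) := by
      rw [hqdef]
      rw [← Category.assoc, ← nat1]
      simp [adj₁.left_triangle_components]
    have hs : s ≫ p.app X = 𝟙 (H.obj X) := by
      rw [hsdef]
      simp only [Category.assoc, ← nat2]
      simp [adj₂.right_triangle_components]
    have hsq : s = q := by
      rw [← Category.comp_id s, ← hq, ← Category.assoc, hs, Category.id_comp]
    exact ⟨q, hq, by rw [← hsq]; exact hs⟩
  exact NatIso.isIso_of_isIso_app p
end

section
/- Let A, Z, U be cocomplete categories, with Z and U having zero objects. Let i_* : Z → A, i^* : A → Z, and j^* : A → U be functors such that: i^* and j^* preserve small colimits; there is a natural isomorphism i^* ∘ i_* ≅ id_Z; j^* ∘ i_* is isomorphic to the constant functor at the zero object of U; and the pair (i^*, j^*) is jointly conservative (a morphism α in A is an isomorphism whenever i^*(α) and j^*(α) are isomorphisms). Then i_* preserves small colimits. -/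
open CategoryTheory Limits

universe x1 x2 x3 y1 y2 y3

namespace Stmt9Aux

variable {C : Type*} [Category C]

lemma isZero_of_retract {X W : C} (hW : IsZero W) (a : X ⟶ W) (b : W ⟶ X)
    (hab : a ≫ b = 𝟙 X) : IsZero X := by
  constructor
  · intro Y
    refine ⟨⟨⟨a ≫ hW.to_ Y⟩, fun f => ?_⟩⟩
    calc f = (a ≫ b) ≫ f := by rw [hab, Category.id_comp]
    _ = a ≫ (b ≫ f) := by rw [Category.assoc]
    _ = a ≫ hW.to_ Y := by rw [hW.eq_of_src (b ≫ f) (hW.to_ Y)]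
  · intro Y
    refine ⟨⟨⟨hW.from_ Y ≫ b⟩, fun f => ?_⟩⟩
    calc f = f ≫ (a ≫ b) := by rw [hab, Category.comp_id]
    _ = (f ≫ a) ≫ b := by rw [Category.assoc]
    _ = hW.from_ Y ≫ b := by rw [hW.eq_of_tgt (f ≫ a) (hW.from_ Y)]

lemma isIso_of_isZero {X Y : C} (hX : IsZero X) (hY : IsZero Y) (f : X ⟶ Y) : IsIso f := by
  have : f = (hX.iso hY).hom := hX.eq_of_src _ _
  rw [this]
  infer_instance

lemma isIso_π_of_eq {X Y : C} {f g : X ⟶ Y} (h : f = g) {c : Cofork f g}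
    (hc : IsColimit c) : IsIso c.π := by
  have w : f ≫ 𝟙 Y = g ≫ 𝟙 Y := by rw [h]
  let r : c.pt ⟶ Y := hc.desc (Cofork.ofπ (𝟙 Y) w)
  have h1 : c.π ≫ r = 𝟙 Y := by
    have h0 := Cofork.IsColimit.π_desc (t := Cofork.ofπ (𝟙 Y) w) hc
    rwa [Cofork.π_ofπ] at h0
  have h2 : r ≫ c.π = 𝟙 c.pt := by
    apply Cofork.IsColimit.hom_ext hc
    rw [← Category.assoc, h1]
    simp
  exact ⟨r, h1, h2⟩

lemma small_of_small_pow_bool {S : Type*} (h : Small.{u} (S → Bool)) : Small.{u} S := by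
  classical
  haveI := h
  refine small_of_injective (f := fun (x : S) (y : S) => (decide (y = x) : Bool)) ?_
  intro x x' hxx'
  have h2 := congrFun hxx' x
  simp only [decide_eq_decide, eq_self_iff_true, true_iff] at h2
  exact h2

section Main

variable {A : Type x1} {Z : Type x2} {U : Type x3}
variable [Category.{y1} A] [Category.{y2} Z] [Category.{y3} U]
variable [HasColimits A] [HasColimits Z] [HasColimits U]
variable [HasZeroObject Z] [HasZeroObject U]
variable (istar : Z ⥤ A) (ipull : A ⥤ Z) (jpull : A ⥤ U)
variable [PreservesColimits ipull] [PreservesColimits jpull]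

theorem main (e : istar ⋙ ipull ≅ 𝟭 Z)
    (hz : ∀ z : Z, IsZero (jpull.obj (istar.obj z)))
    (hcons : ∀ {X Y : A} (α : X ⟶ Y), IsIso (ipull.map α) → IsIso (jpull.map α) →
      IsIso α)
    {J : Type y1} [Category.{y1} J] (F : J ⥤ Z) (c : Cocone F) (hc : IsColimit c) :
    Nonempty (IsColimit (istar.mapCocone c)) := by
  haveI hip0 : PreservesColimitsOfSize.{0, 0} ipull :=
    preservesSmallestColimits_of_preservesColimits ipull
  haveI hjp0 : PreservesColimitsOfSize.{0, 0} jpull :=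
    preservesSmallestColimits_of_preservesColimits jpull
  obtain ⟨Z0, hZ0⟩ := HasZeroObject.zero (C := Z)
  -- istar is faithful
  have hfaith : ∀ {z z' : Z} (f g : z ⟶ z'), istar.map f = istar.map g → f = g := by
    intro z z' f g hfg
    have h1 := e.hom.naturality f
    have h2 := e.hom.naturality g
    simp only [Functor.comp_map, Functor.id_map] at h1 h2
    have h3 : ipull.map (istar.map f) = ipull.map (istar.map g) := by rw [hfg]
    rw [h3] at h1
    have h4 := h1.symm.trans h2
    exact (cancel_epi (e.hom.app z)).mp h4
  -- joint faithfulness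
  have hjfaith : ∀ {X Y : A} (f g : X ⟶ Y), ipull.map f = ipull.map g →
      jpull.map f = jpull.map g → f = g := by
    intro X Y f g h1 h2
    have hπi : IsIso (ipull.map (coequalizer.π f g)) := by
      have hl := isColimitCoforkMapOfIsColimit ipull (coequalizer.condition f g)
        (coequalizerIsCoequalizer f g)
      have := isIso_π_of_eq h1 hl
      rwa [Cofork.π_ofπ] at this
    have hπj : IsIso (jpull.map (coequalizer.π f g)) := by
      have hl := isColimitCoforkMapOfIsColimit jpull (coequalizer.condition f g)
        (coequalizerIsCoequalizer f g)
      have := isIso_π_of_eq h2 hl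
      rwa [Cofork.π_ofπ] at this
    have : IsIso (coequalizer.π f g) := hcons _ hπi hπj
    rw [← cancel_mono (coequalizer.π f g)]
    exact coequalizer.condition f g
  -- istar of the zero object is initial in A
  have hinitA : IsInitial (istar.obj Z0) := by
    have ki : IsInitial (ipull.obj (⊥_ A)) := initialIsInitial.isInitialObj ipull _
    have kj : IsInitial (jpull.obj (⊥_ A)) := initialIsInitial.isInitialObj jpull _
    have hmidZ : IsZero (ipull.obj (istar.obj Z0)) := hZ0.of_iso (e.app Z0)
    have hmidU : IsZero (jpull.obj (istar.obj Z0)) := hz Z0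
    have hk : IsIso (ipull.map (initial.to (istar.obj Z0))) :=
      ⟨hmidZ.to_ _, ki.hom_ext _ _, hmidZ.eq_of_src _ _⟩
    have hkj : IsIso (jpull.map (initial.to (istar.obj Z0))) :=
      ⟨hmidU.to_ _, kj.hom_ext _ _, hmidU.eq_of_src _ _⟩
    have : IsIso (initial.to (istar.obj Z0)) := hcons _ hk hkj
    exact initialIsInitial.ofIso (asIso (initial.to (istar.obj Z0)))
  -- the comparison morphism
  have ht := colimit.isColimit (F ⋙ istar)
  set φ : colimit (F ⋙ istar) ⟶ istar.obj c.pt :=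
    colimit.desc (F ⋙ istar) (istar.mapCocone c) with hφ
  have hφι : ∀ j, colimit.ι (F ⋙ istar) j ≫ φ = istar.map (c.ι.app j) := by
    intro j
    rw [hφ]
    simpa using colimit.ι_desc (istar.mapCocone c) j
  -- (1) : ipull.map φ is iso
  have hiso1 : IsIso (ipull.map φ) := by
    by_cases HP5 : ∀ α : Type y1, Small.{y2} α
    · -- small case: transfer the preservation instance along the small model
      haveI : LocallySmall.{y2} J := ⟨fun _ _ => HP5 _⟩
      haveI : EssentiallySmall.{y2} J := (essentiallySmall_iff J).2 ⟨HP5 _, inferInstance⟩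
      haveI : PreservesColimitsOfShape J ipull :=
        preservesColimitsOfShape_of_equiv (equivSmallModel J).symm ipull
      have k1 : IsColimit (ipull.mapCocone (colimit.cocone (F ⋙ istar))) :=
        isColimitOfPreserves ipull ht
      have k2 : IsColimit (ipull.mapCocone (istar.mapCocone c)) := by
        let β : F ⋙ (istar ⋙ ipull) ≅ F ⋙ 𝟭 Z := Functor.isoWhiskerLeft F e
        have hcβ : IsColimit ((Cocone.precompose β.hom).obj c) :=
          (IsColimit.precomposeHomEquiv β c).symm hc
        refine hcβ.ofIsoColimit (Cocones.ext (e.app c.pt).symm ?_)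
        intro j
        have hnat := e.hom.naturality (c.ι.app j)
        simp only [Functor.comp_map, Functor.id_map, Functor.const_obj_obj] at hnat
        simp only [Cocone.precompose_obj_ι, NatTrans.comp_app, Functor.mapCocone_ι_app,
          Iso.symm_hom, Iso.app_inv, β, Functor.isoWhiskerLeft_hom, Functor.whiskerLeft_app,
          Functor.const_obj_obj]
        rw [← hnat, Category.assoc]
        simp
      have huniq : ipull.map φ = (k1.coconePointUniqueUpToIso k2).hom := by
        refine k1.hom_ext fun j => ?_
        rw [IsColimit.comp_coconePointUniqueUpToIso_hom]
        simp only [Functor.mapCocone_ι_app, colimit.cocone_ι, ← Functor.map_comp, hφι j]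
      rw [huniq]
      infer_instance
    · -- large case: Freyd collapse, Z is thin, hence everything is iso
      obtain ⟨S, hS⟩ := not_forall.mp HP5
      have hthin : ∀ {z z' : Z} (f g : z ⟶ z'), f = g := by
        intro z z' f g
        by_contra hne
        have hχinj : Function.Injective
            (fun v : S → Bool =>
              ipull.map (Sigma.desc (fun s => istar.map (if v s then f else g)) :
                (∐ fun _ : S => istar.obj z) ⟶ istar.obj z')) := by
        -- injectivity
          intro v w hvw
          have hχ : (Sigma.desc (fun s => istar.map (if v s then f else g)) :
                (∐ fun _ : S => istar.obj z) ⟶ istar.obj z') =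
              Sigma.desc (fun s => istar.map (if w s then f else g)) :=
            hjfaith _ _ hvw ((hz z').eq_of_tgt _ _)
          funext s
          have h1 : istar.map (if v s then f else g) = istar.map (if w s then f else g) := by
            have h0 := congrArg (fun k => Sigma.ι (fun _ : S => istar.obj z) s ≫ k) hχ
            simpa using h0
          have h2 := hfaith _ _ h1
          cases hvs : v s <;> cases hws : w s <;> rw [hvs, hws] at h2 <;> simp at h2 ⊢
          · exact absurd h2.symm hne
          · exact absurd h2 hne
        have hsmall : Small.{y2} (S → Bool) := small_of_injective hχinj
        exact hS (small_of_small_pow_bool hsmall)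
      exact ⟨hZ0.from_ _ ≫ hZ0.to_ _, hthin _ _, hthin _ _⟩
  -- (2) : jpull of the colimit is zero
  have hzero2 : IsZero (jpull.obj (colimit (F ⋙ istar))) := by
    by_cases HP6 : ∀ α : Type y1, Small.{y3} α
    · -- small case: jpull preserves the colimit, which is a colimit of zero objects
      haveI : LocallySmall.{y3} J := ⟨fun _ _ => HP6 _⟩
      haveI : EssentiallySmall.{y3} J := (essentiallySmall_iff J).2 ⟨HP6 _, inferInstance⟩
      haveI : PreservesColimitsOfShape J jpull :=
        preservesColimitsOfShape_of_equiv (equivSmallModel J).symm jpull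
      have jc : IsColimit (jpull.mapCocone (colimit.cocone (F ⋙ istar))) :=
        isColimitOfPreserves jpull ht
      obtain ⟨U0, hU0⟩ := HasZeroObject.zero (C := U)
      let s0 : Cocone ((F ⋙ istar) ⋙ jpull) :=
        { pt := U0
          ι :=
            { app := fun j => (hz (F.obj j)).to_ U0
              naturality := fun j j' f => (hz (F.obj j)).eq_of_src _ _ } }
      have hab : jc.desc s0 ≫ hU0.to_ (jpull.obj (colimit (F ⋙ istar))) =
          𝟙 (jpull.obj (colimit (F ⋙ istar))) := by
        refine jc.hom_ext fun j => ?_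
        exact (hz (F.obj j)).eq_of_src _ _
      exact isZero_of_retract hU0 _ _ hab
    · -- large case: pigeonhole collision
      obtain ⟨S, hS⟩ := not_forall.mp HP6
      -- the canonical map to `istar Z0`
      let s1 : Cocone (F ⋙ istar) :=
        { pt := istar.obj Z0
          ι :=
            { app := fun j => istar.map (hZ0.from_ (F.obj j))
              naturality := fun j j' f => by
                dsimp
                rw [Category.comp_id, ← Functor.map_comp]
                exact congrArg istar.map (hZ0.eq_of_tgt _ _) } }
      set ω : colimit (F ⋙ istar) ⟶ istar.obj Z0 := colimit.desc (F ⋙ istar) s1 with hω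
      set ρ0 : istar.obj Z0 ⟶ colimit (F ⋙ istar) := hinitA.to _ with hρ0
      set zt : colimit (F ⋙ istar) ⟶ colimit (F ⋙ istar) := ω ≫ ρ0 with hzt
      have hninj : ¬ Function.Injective
          (fun v : S → Bool =>
            jpull.map ((Sigma.desc (fun s => if v s then 𝟙 _ else zt)) :
              (∐ fun _ : S => colimit (F ⋙ istar)) ⟶ colimit (F ⋙ istar))) := by
        intro hinj
        exact hS (small_of_small_pow_bool (small_of_injective hinj))
      rw [Function.not_injective_iff] at hninj
      obtain ⟨v, w, hvw, hne⟩ := hninj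
      have hsd : ∃ s, v s ≠ w s := by
        by_contra h
        push_neg at h
        exact hne (funext h)
      obtain ⟨s, hs⟩ := hsd
      have hcomp : jpull.map (if v s then 𝟙 (colimit (F ⋙ istar)) else zt) =
          jpull.map (if w s then 𝟙 (colimit (F ⋙ istar)) else zt) := by
        have h0 := congrArg
          (fun k => jpull.map (Sigma.ι (fun _ : S => colimit (F ⋙ istar)) s) ≫ k) hvw
        rw [← Functor.map_comp, ← Functor.map_comp, Sigma.ι_desc, Sigma.ι_desc] at h0
        exact h0
      have hfin : 𝟙 (jpull.obj (colimit (F ⋙ istar))) = jpull.map zt := by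
        cases hvs : v s <;> cases hws : w s
        · rw [hvs, hws] at hs; exact absurd rfl hs
        · rw [hvs, hws] at hcomp
          simp at hcomp
          exact hcomp.symm
        · rw [hvs, hws] at hcomp
          simp at hcomp
          exact hcomp
        · rw [hvs, hws] at hs; exact absurd rfl hs
      refine isZero_of_retract (hz Z0) (jpull.map ω) (jpull.map ρ0) ?_
      rw [← Functor.map_comp, ← hzt]
      exact hfin.symm
  have hiso2 : IsIso (jpull.map φ) := isIso_of_isZero hzero2 (hz c.pt) _
  have hiso : IsIso φ := hcons φ hiso1 hiso2
  exact ⟨IsColimit.ofIsoColimit ht (Cocones.ext (asIso φ) (fun j => hφι j))⟩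

end Main

end Stmt9Aux


/-- Localization-type data: cocomplete categories `A`, `Z`, `U` with zero objects in
`Z` and `U`, colimit-preserving functors `i^* : A ⥤ Z`, `j^* : A ⥤ U`, a functor
`i_* : Z ⥤ A` with `i^* ∘ i_* ≅ id`, `j^* ∘ i_*` pointwise zero, and `(i^*, j^*)`
jointly conservative.  Then `i_*` preserves small colimits. -/
theorem stmt9 {A Z U : Type*} [Category A] [Category Z] [Category U]
    [HasColimits A] [HasColimits Z] [HasColimits U]
    [HasZeroObject Z] [HasZeroObject U]
    (istar : Z ⥤ A) (ipull : A ⥤ Z) (jpull : A ⥤ U)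
    [PreservesColimits ipull] [PreservesColimits jpull]
    (e : istar ⋙ ipull ≅ 𝟭 Z)
    (hz : ∀ z : Z, IsZero (jpull.obj (istar.obj z)))
    (hcons : ∀ {X Y : A} (α : X ⟶ Y), IsIso (ipull.map α) → IsIso (jpull.map α) →
      IsIso α) :
    PreservesColimits istar := by
    exact
    { preservesColimitsOfShape := fun {J} {𝒥} =>
        { preservesColimit := fun {F} =>
            { preserves := fun {c} hc =>
                Stmt9Aux.main istar ipull jpull e hz @hcons F c hc } } }
end

section
/- Let P be a cd-structure on a category C with an initial object, and equip C with the topology generated by P (for each square Q in P with vertical map f : X → S and horizontal map g : S' → S, the sieve generated by {f, g} is declared covering). Assume every square Q in P, with corners X' → X, X' → S', S' → S, X → S, satisfies: (i) Q is cartesian; (ii) g : S' → S is a monomorphism; (iii) for every morphism U → S in C the base change Q ×_S U exists and belongs to P; (iv) the square with horizontal maps X' → X, X' ×_{S'} X' → X ×_S X and vertical diagonal maps belongs to P. Then a presheaf of sets F : C^op → Set is a sheaf for this topology if and only if F is excisive, i.e., F(Q) is a cartesian (pullback) square of sets for every Q ∈ P. -/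
open CategoryTheory Limits

universe w v u

variable {C : Type u} [Category.{v} C]

/-- A commutative square in `C`, with vertical maps `X' → S'`, `X → S` and
horizontal maps `X' → X`, `S' → S`.  A cd-structure is a set of such squares. -/
structure CDSquare (C : Type u) [Category.{v} C] where
  X' : C
  X : C
  S' : C
  S : C
  top : X' ⟶ X
  left : X' ⟶ S'
  right : X ⟶ S
  bottom : S' ⟶ S
  comm : top ≫ right = left ≫ bottom

namespace CDSquare

/-- The covering family `{X → S, S' → S}` associated with a square. -/
def coverPresieve (Q : CDSquare C) : Presieve Q.S :=
  Presieve.ofArrows (fun b : Bool => bif b then Q.X else Q.S')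
    (fun b => Bool.rec (motive := fun b => (bif b then Q.X else Q.S') ⟶ Q.S)
      Q.bottom Q.right b)

/-- The square of sets `F(Q)` is cartesian: for compatible `x ∈ F(X)`, `y ∈ F(S')`
there is a unique `s ∈ F(S)` restricting to both. -/
def FCartesian (Q : CDSquare C) (F : Cᵒᵖ ⥤ Type w) : Prop :=
  ∀ (x : F.obj (Opposite.op Q.X)) (y : F.obj (Opposite.op Q.S')),
    F.map Q.top.op x = F.map Q.left.op y →
      ∃! s : F.obj (Opposite.op Q.S),
        F.map Q.right.op s = x ∧ F.map Q.bottom.op s = y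

end CDSquare

/-- The Grothendieck topology generated by a cd-structure: the smallest topology for
which, for every square of the cd-structure, the sieve generated by the two maps
`X → S` and `S' → S` is covering. -/
def cdTopology (P : Set (CDSquare C)) : GrothendieckTopology C :=
  sInf {J | ∀ Q ∈ P, Sieve.generate Q.coverPresieve ∈ J Q.S}

/-- `Q'` is a base change of the square `Q` along `u : U ⟶ Q.S`: its corners are the
fiber products of the corners of `Q` with `U` over `S`. -/
def IsCDBaseChange (Q Q' : CDSquare C) {U : C} (u : U ⟶ Q.S) : Prop :=
  ∃ (h : Q'.S = U) (pX : Q'.X ⟶ Q.X) (pS' : Q'.S' ⟶ Q.S') (pX' : Q'.X' ⟶ Q.X'),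
    IsPullback pX (Q'.right ≫ eqToHom h) Q.right u ∧
    IsPullback pS' (Q'.bottom ≫ eqToHom h) Q.bottom u ∧
    IsPullback pX' Q'.top Q.top pX ∧
    pX' ≫ Q.left = Q'.left ≫ pS'

/-- Condition (iv): the "diagonal square" of `Q`, with horizontal maps `X' → X` and
`X' ×_{S'} X' → X ×_S X` and vertical maps the diagonals, exists and belongs to `P`. -/
def HasDiagonalSquare (P : Set (CDSquare C)) (Q : CDSquare C) : Prop :=
  ∃ (W W' : C) (p₁ p₂ : W ⟶ Q.X) (q₁ q₂ : W' ⟶ Q.X')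
    (_ : IsPullback p₁ p₂ Q.right Q.right) (_ : IsPullback q₁ q₂ Q.left Q.left)
    (d : Q.X ⟶ W) (d' : Q.X' ⟶ W') (m : W' ⟶ W)
    (hcomm : Q.top ≫ d = d' ≫ m),
    d ≫ p₁ = 𝟙 Q.X ∧ d ≫ p₂ = 𝟙 Q.X ∧
    d' ≫ q₁ = 𝟙 Q.X' ∧ d' ≫ q₂ = 𝟙 Q.X' ∧
    m ≫ p₁ = q₁ ≫ Q.top ∧ m ≫ p₂ = q₂ ≫ Q.top ∧
    (⟨Q.X', Q.X, W', W, Q.top, d', d, m, hcomm⟩ : CDSquare C) ∈ P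

/-- The coverage associated with a cd-structure whose squares admit base changes. -/
def cdCoverage (P : Set (CDSquare C))
    (h3 : ∀ Q ∈ P, ∀ {U : C} (u : U ⟶ Q.S), ∃ Q' ∈ P, IsCDBaseChange Q Q' u) :
    Coverage C where
  coverings X := {R | ∃ Q ∈ P, ∃ e : Q.S = X, R = e ▸ Q.coverPresieve}
  pullback := by
    rintro X Y f S ⟨Q, hQ, rfl, rfl⟩
    obtain ⟨Q', hQ', hY, pX, pS', pX', hpb1, hpb2, hpb3, hc⟩ := h3 Q hQ f
    subst hY
    refine ⟨Q'.coverPresieve, ⟨Q', hQ', rfl, rfl⟩, ?_⟩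
    rintro Z g ⟨b⟩
    cases b with
    | true =>
        refine ⟨Q.X, pX, Q.right, Presieve.ofArrows.mk true, ?_⟩
        have := hpb1.w
        simpa using this
    | false =>
        refine ⟨Q.S', pS', Q.bottom, Presieve.ofArrows.mk false, ?_⟩
        have := hpb2.w
        simpa using this

/-- Voevodsky's criterion: for a cd-structure `P` on a category with an initial object
such that every square of `P` is cartesian, has monomorphic horizontal bottom map, is
stable under base change within `P`, and whose diagonal square again belongs to `P`,
a presheaf of sets is a sheaf for the topology generated by `P` if and only if it is
excisive, i.e. sends every square of `P` to a cartesian square of sets. -/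
theorem stmt12 [HasInitial C] (P : Set (CDSquare C))
    (h1 : ∀ Q ∈ P, IsPullback Q.top Q.left Q.right Q.bottom)
    (h2 : ∀ Q ∈ P, Mono Q.bottom)
    (h3 : ∀ Q ∈ P, ∀ {U : C} (u : U ⟶ Q.S), ∃ Q' ∈ P, IsCDBaseChange Q Q' u)
    (h4 : ∀ Q ∈ P, HasDiagonalSquare P Q)
    (F : Cᵒᵖ ⥤ Type w) :
    Presieve.IsSheaf (cdTopology P) F ↔ ∀ Q ∈ P, Q.FCartesian F := by
  classical
  have hmem : ∀ Q ∈ P, Sieve.generate Q.coverPresieve ∈ cdTopology P Q.S := by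
    intro Q hQ
    rw [cdTopology, GrothendieckTopology.mem_sInf]
    intro J hJ
    exact hJ Q hQ
  constructor
  · -- sheaf → excisive
    intro hF
    -- separatedness along the two maps of any square of `P`
    have sep : ∀ Q' ∈ P, ∀ (a b : F.obj (Opposite.op Q'.S)),
        F.map Q'.right.op a = F.map Q'.right.op b →
        F.map Q'.bottom.op a = F.map Q'.bottom.op b → a = b := by
      intro Q' hQ' a b hra hba
      have hsep : Presieve.IsSeparatedFor F
          ((Sieve.generate Q'.coverPresieve : Sieve Q'.S) : Presieve Q'.S) :=
        (hF _ (hmem Q' hQ')).isSeparatedFor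
      refine hsep (fun Z f _ => F.map f.op a) a b (fun Z f _ => rfl) ?_
      rintro Z f ⟨W, g, h, hh, rfl⟩
      cases hh with
      | mk b' =>
        cases b' with
        | true =>
            show F.map (g ≫ Q'.right).op b = F.map (g ≫ Q'.right).op a
            rw [op_comp, FunctorToTypes.map_comp_apply, FunctorToTypes.map_comp_apply, hra]
        | false =>
            show F.map (g ≫ Q'.bottom).op b = F.map (g ≫ Q'.bottom).op a
            rw [op_comp, FunctorToTypes.map_comp_apply, FunctorToTypes.map_comp_apply, hba]
    intro Q hQ x y hxy
    have hshf : Presieve.IsSheafFor F Q.coverPresieve :=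
      (Presieve.isSheafFor_iff_generate _).2 (hF _ (hmem Q hQ))
    rw [CDSquare.coverPresieve, Presieve.isSheafFor_arrows_iff] at hshf
    set z : ∀ b : Bool, F.obj (Opposite.op (bif b then Q.X else Q.S')) :=
      fun b => Bool.rec (motive := fun b => F.obj (Opposite.op (bif b then Q.X else Q.S')))
        y x b with hz
    have hcompat : Presieve.Arrows.Compatible F
        (fun b => Bool.rec (motive := fun b => (bif b then Q.X else Q.S') ⟶ Q.S)
          Q.bottom Q.right b) z := by
      intro i j Z gi gj hij
      cases i <;> cases j
      · -- bottom / bottom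
        have : gi = gj := by
          have := h2 Q hQ
          exact (cancel_mono Q.bottom).1 hij
        rw [this]
      · -- bottom / right : gi : Z ⟶ S', gj : Z ⟶ X, gj ≫ right = gi ≫ bottom
        have hl := (h1 Q hQ).lift_fst gj gi hij.symm
        have hl' := (h1 Q hQ).lift_snd gj gi hij.symm
        calc F.map gi.op (z false)
            = F.map (((h1 Q hQ).lift gj gi hij.symm) ≫ Q.left).op y := by rw [hl']
          _ = F.map ((h1 Q hQ).lift gj gi hij.symm).op (F.map Q.left.op y) := by
              rw [op_comp, FunctorToTypes.map_comp_apply]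
          _ = F.map ((h1 Q hQ).lift gj gi hij.symm).op (F.map Q.top.op x) := by rw [hxy]
          _ = F.map (((h1 Q hQ).lift gj gi hij.symm) ≫ Q.top).op x := by
              rw [op_comp, FunctorToTypes.map_comp_apply]
          _ = F.map gj.op (z true) := by rw [hl]
      · -- right / bottom
        have hl := (h1 Q hQ).lift_fst gi gj hij
        have hl' := (h1 Q hQ).lift_snd gi gj hij
        calc F.map gi.op (z true)
            = F.map (((h1 Q hQ).lift gi gj hij) ≫ Q.top).op x := by rw [hl]
          _ = F.map ((h1 Q hQ).lift gi gj hij).op (F.map Q.top.op x) := by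
              rw [op_comp, FunctorToTypes.map_comp_apply]
          _ = F.map ((h1 Q hQ).lift gi gj hij).op (F.map Q.left.op y) := by rw [hxy]
          _ = F.map (((h1 Q hQ).lift gi gj hij) ≫ Q.left).op y := by
              rw [op_comp, FunctorToTypes.map_comp_apply]
          _ = F.map gj.op (z false) := by rw [hl']
      · -- right / right : the diagonal square argument
        obtain ⟨W, W', p₁, p₂, q₁, q₂, hW, hW', d, d', m, hcd,
          hdp₁, hdp₂, hdq₁, hdq₂, hmp₁, hmp₂, hD⟩ := h4 Q hQ
        set D : CDSquare C := ⟨Q.X', Q.X, W', W, Q.top, d', d, m, hcd⟩ with hDdef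
        have hab : F.map p₁.op (x) = F.map p₂.op (x) := by
          refine sep D hD (F.map p₁.op x) (F.map p₂.op x) ?_ ?_
          · show F.map d.op (F.map p₁.op x) = F.map d.op (F.map p₂.op x)
            rw [← FunctorToTypes.map_comp_apply, ← FunctorToTypes.map_comp_apply,
              ← op_comp, ← op_comp, hdp₁, hdp₂]
          · show F.map m.op (F.map p₁.op x) = F.map m.op (F.map p₂.op x)
            rw [← FunctorToTypes.map_comp_apply, ← FunctorToTypes.map_comp_apply,
              ← op_comp, ← op_comp, hmp₁, hmp₂, op_comp, op_comp,
              FunctorToTypes.map_comp_apply, FunctorToTypes.map_comp_apply, hxy,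
              ← FunctorToTypes.map_comp_apply, ← FunctorToTypes.map_comp_apply,
              ← op_comp, ← op_comp, hW'.w]
        have hl := hW.lift_fst gi gj hij
        have hl' := hW.lift_snd gi gj hij
        calc F.map gi.op (z true)
            = F.map ((hW.lift gi gj hij) ≫ p₁).op x := by rw [hl]
          _ = F.map (hW.lift gi gj hij).op (F.map p₁.op x) := by
              rw [op_comp, FunctorToTypes.map_comp_apply]
          _ = F.map (hW.lift gi gj hij).op (F.map p₂.op x) := by rw [hab]
          _ = F.map ((hW.lift gi gj hij) ≫ p₂).op x := by
              rw [op_comp, FunctorToTypes.map_comp_apply]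
          _ = F.map gj.op (z true) := by rw [hl']
    obtain ⟨t, ht, ht'⟩ := hshf z hcompat
    refine ⟨t, ⟨ht true, ht false⟩, ?_⟩
    intro s hs
    exact ht' s (fun b => by cases b with
      | true => exact hs.1
      | false => exact hs.2)
  · -- excisive → sheaf
    intro hex
    have hle : cdTopology P ≤ (cdCoverage P h3).toGrothendieck := by
      apply sInf_le
      intro Q hQ
      exact Coverage.Saturate.of Q.S Q.coverPresieve ⟨Q, hQ, rfl, rfl⟩
    refine Presieve.isSheaf_of_le F hle ?_
    rw [Presieve.isSheaf_coverage]
    rintro X R ⟨Q, hQ, rfl, rfl⟩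
    show Presieve.IsSheafFor F Q.coverPresieve
    rw [CDSquare.coverPresieve, Presieve.isSheafFor_arrows_iff]
    intro z hz
    have hxy : F.map Q.top.op (z true) = F.map Q.left.op (z false) :=
      hz true false Q.X' Q.top Q.left Q.comm
    obtain ⟨s, ⟨hs1, hs2⟩, hu⟩ := hex Q hQ (z true) (z false) hxy
    refine ⟨s, ?_, ?_⟩
    · intro b
      cases b with
      | true => exact hs1
      | false => exact hs2
    · intro t ht
      exact hu t ⟨ht true, ht false⟩
end
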